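/- Let g' ≥ 0, k' ≥ 1, r ≥ 0 be integers, m₁,…,m_r ≥ 2 integers, s ≥ 0 an even integer, and ε ∈ {1, 2}, and suppose μ = ε·g' + k' - 2 + Σᵢ(1 - 1/mᵢ) + s/4 satisfies 0 < μ < 1. Then (ε·g' + k' - 2) ∈ {-1, 0}; if ε·g' + k' - 2 = 0 then r ≤ 1, with (r, s) ∈ {(0, 2), (1, 0)}; and if ε·g' + k' - 2 = -1 then r ≤ 3, with: r = 0 forcing s = 6; r = 1 forcing s ∈ {2, 4}; r = 2 forcing s ∈ {0, 2} and, when s = 2, 1/m₁ + 1/m₂ > 1/2; and r = 3 forcing s = 0 and 1/m₁ + 1/m₂ + 1/m₃ > 1. -/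
import Mathlib


theorem signature_area_classification (g' k' r s ε : ℕ) (m : ℕ → ℕ)
    (hk' : 1 ≤ k') (hm : ∀ i < r, 2 ≤ m i) (hs : Even s) (hε : ε = 1 ∨ ε = 2)
    (μ : ℚ)
    (hμ : μ = (ε : ℚ) * g' + k' - 2 + (∑ i ∈ Finset.range r, (1 - 1 / (m i : ℚ))) + s / 4)
    (hpos : 0 < μ) (hlt : μ < 1) :
    ((ε : ℤ) * g' + k' - 2 = -1 ∨ (ε : ℤ) * g' + k' - 2 = 0) ∧
    ((ε : ℤ) * g' + k' - 2 = 0 → ((r = 0 ∧ s = 2) ∨ (r = 1 ∧ s = 0))) ∧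
    ((ε : ℤ) * g' + k' - 2 = -1 →
      r ≤ 3 ∧
      (r = 0 → s = 6) ∧
      (r = 1 → s = 2 ∨ s = 4) ∧
      (r = 2 → (s = 0 ∨ s = 2) ∧ (s = 2 → 1 / (m 0 : ℚ) + 1 / (m 1 : ℚ) > 1 / 2)) ∧
      (r = 3 → s = 0 ∧ 1 / (m 0 : ℚ) + 1 / (m 1 : ℚ) + 1 / (m 2 : ℚ) > 1)) := by
  have hm' : ∀ i < r, (2:ℚ) ≤ m i := fun i hi => by exact_mod_cast hm i hi
  have hterm_lb : ∀ i ∈ Finset.range r, (1:ℚ)/2 ≤ 1 - 1/(m i : ℚ) := by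
    intro i hi
    have h2 := hm' i (Finset.mem_range.mp hi)
    have h0 : (0:ℚ) < m i := by linarith
    have h3 : 1/(m i:ℚ) ≤ 1/2 := by
      rw [div_le_div_iff₀ h0 (by norm_num)]; linarith
    linarith
  have hterm_pos : ∀ i < r, 0 < 1/(m i:ℚ) := by
    intro i hi
    have := hm' i hi
    exact one_div_pos.mpr (by linarith)
  have hSlb : (r:ℚ)/2 ≤ ∑ i ∈ Finset.range r, (1 - 1/(m i:ℚ)) := by
    calc (r:ℚ)/2 = ∑ _i ∈ Finset.range r, (1/2:ℚ) := by
          simp [Finset.sum_const, Finset.card_range, nsmul_eq_mul]; ring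
      _ ≤ _ := Finset.sum_le_sum hterm_lb
  have hS0 : (0:ℚ) ≤ ∑ i ∈ Finset.range r, (1 - 1/(m i:ℚ)) :=
    le_trans (by positivity) hSlb
  set t : ℤ := (ε:ℤ)*g'+k'-2 with ht
  have hμ2 : μ = (t:ℚ) + (∑ i ∈ Finset.range r, (1 - 1/(m i:ℚ))) + s/4 := by
    rw [hμ, ht]; push_cast; ring
  have hs4 : (0:ℚ) ≤ (s:ℚ)/4 := by positivity
  have htlb : -1 ≤ t := by
    have h1 : (0:ℤ) ≤ (ε:ℤ)*g' := by positivity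
    have h2 : (1:ℤ) ≤ (k':ℤ) := by exact_mod_cast hk'
    omega
  have htub : t ≤ 0 := by
    have h1 : (t:ℚ) < 1 := by linarith
    have h2 : t < 1 := by exact_mod_cast h1
    omega
  obtain ⟨c, hc⟩ := hs
  refine ⟨by omega, ?_, ?_⟩
  · -- t = 0 case
    intro h0
    rw [h0] at hμ2
    push_cast at hμ2
    have hr : r ≤ 1 := by
      have h1 : (r:ℚ) < 2 := by linarith
      have h2 : r < 2 := by exact_mod_cast h1
      omega
    interval_cases r
    · left
      refine ⟨rfl, ?_⟩
      simp [Finset.sum_range_zero] at hμ2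
      have h1 : (s:ℚ) < 4 := by linarith
      have h2 : (0:ℚ) < (s:ℚ) := by linarith
      have h3 : s < 4 := by exact_mod_cast h1
      have h4 : 0 < s := by exact_mod_cast h2
      omega
    · right
      refine ⟨rfl, ?_⟩
      rw [Finset.sum_range_one] at hμ2
      have hlb := hterm_lb 0 (Finset.mem_range.mpr (by norm_num))
      have h1 : (s:ℚ) < 2 := by linarith
      have h2 : s < 2 := by exact_mod_cast h1
      omega
  · -- t = -1 case
    intro hneg
    rw [hneg] at hμ2
    push_cast at hμ2
    have hr : r ≤ 3 := by
      have h1 : (r:ℚ) < 4 := by linarith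
      have h2 : r < 4 := by exact_mod_cast h1
      omega
    refine ⟨hr, ?_, ?_, ?_, ?_⟩
    · intro hr0
      subst hr0
      simp [Finset.sum_range_zero] at hμ2
      have h1 : (s:ℚ) < 8 := by linarith
      have h2 : (4:ℚ) < (s:ℚ) := by linarith
      have h3 : s < 8 := by exact_mod_cast h1
      have h4 : 4 < s := by exact_mod_cast h2
      omega
    · intro hr1
      subst hr1
      rw [Finset.sum_range_one] at hμ2
      have hlb := hterm_lb 0 (Finset.mem_range.mpr (by norm_num))
      have hp := hterm_pos 0 (by norm_num)
      have h1 : (s:ℚ) < 6 := by linarith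
      have h2 : (0:ℚ) < (s:ℚ) := by linarith
      have h3 : s < 6 := by exact_mod_cast h1
      have h4 : 0 < s := by exact_mod_cast h2
      omega
    · intro hr2
      subst hr2
      rw [Finset.sum_range_succ, Finset.sum_range_one] at hμ2
      have hlb0 := hterm_lb 0 (Finset.mem_range.mpr (by norm_num))
      have hlb1 := hterm_lb 1 (Finset.mem_range.mpr (by norm_num))
      have h1 : (s:ℚ) < 4 := by linarith
      have h3 : s < 4 := by exact_mod_cast h1
      refine ⟨by omega, ?_⟩
      intro hs2
      subst hs2
      push_cast at hμ2
      linarith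
    · intro hr3
      subst hr3
      rw [Finset.sum_range_succ, Finset.sum_range_succ, Finset.sum_range_one] at hμ2
      have hlb0 := hterm_lb 0 (Finset.mem_range.mpr (by norm_num))
      have hlb1 := hterm_lb 1 (Finset.mem_range.mpr (by norm_num))
      have hlb2 := hterm_lb 2 (Finset.mem_range.mpr (by norm_num))
      have h1 : (s:ℚ) < 2 := by linarith
      have h3 : s < 2 := by exact_mod_cast h1
      have hs0 : s = 0 := by omega
      subst hs0
      push_cast at hμ2
      exact ⟨rfl, by linarith⟩
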